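/- Let A be a nonzero linear ID-primitive differential polynomial in (G₀) with |G₀| = c(A) + 1, and suppose rank(S) = n − 1. Given B ∈ G \ G₀, suppose there exists a positive integer e_B with 1 ≤ e_B ≤ c(A) and ord(B,u_j) ≤ N − γ_j − γ − e_B for all j = 1,…,n−1. Then there exists B̄ ∈ (G₀) such that c(B − B̄) ≥ e_B. -/

import Mathlib

open MvPolynomial

namespace DPPE

/-- Differential variables: `(Sum.inl i, k)` is the `k`-th derivative of `xᵢ`;
`(Sum.inr j, k)` is the `k`-th derivative of `uⱼ`. -/
abbrev Vr (n : ℕ) := (Fin n ⊕ Fin (n - 1)) × ℕ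

/-- The differential polynomial ring `K{X ∪ U}`. -/
abbrev R (K : Type) [Field K] (n : ℕ) := MvPolynomial (Vr n) K

variable {K : Type} [Field K] {n : ℕ}

/-- The order of `f` in the differential indeterminate `v` (equal to `-1` if absent). -/
noncomputable def ordIn {A : Type} [CommSemiring A] (f : MvPolynomial (Vr n) A)
    (v : Fin n ⊕ Fin (n - 1)) : ℤ :=
  WithBot.unbotD (-1) ((f.vars.filter (fun w => w.1 = v)).image (fun w => (w.2 : ℤ))).max

/-- The (total) order of the differential polynomial `f`. -/
noncomputable def ordTot {A : Type} [CommSemiring A] (f : MvPolynomial (Vr n) A) : ℕ :=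
  WithBot.unbotD 0 (f.vars.image Prod.snd).max

/-- `f` belongs to `K{X}`. -/
def xOnly {A : Type} [CommSemiring A] (f : MvPolynomial (Vr n) A) : Prop :=
  ∀ w ∈ f.vars, (w.1).isLeft

/-- `f` belongs to `K{U}`. -/
def uOnly {A : Type} [CommSemiring A] (f : MvPolynomial (Vr n) A) : Prop :=
  ∀ w ∈ f.vars, (w.1).isRight

/-- `f` is a linear (degree at most 1) differential polynomial. -/
def IsLinearPoly {A : Type} [CommSemiring A] (f : MvPolynomial (Vr n) A) : Prop :=
  f.totalDegree ≤ 1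

/-- The coefficient of the `k`-th derivative of the indeterminate `v` in `f`. -/
noncomputable def cf {A : Type} [CommSemiring A] (f : MvPolynomial (Vr n) A)
    (v : Fin n ⊕ Fin (n - 1)) (k : ℕ) : A :=
  MvPolynomial.coeff (Finsupp.single (v, k) 1) f

/-- An order embedding realizing the ranking `R*` on `X ∪ U` that eliminates `U` with
respect to `X`, orderly on each block, with `x_n < ⋯ < x_1` and `u_1 < ⋯ < u_{n-1}`. -/
def rkk (w : Vr n) : Lex (Bool × Lex (ℕ × ℕ)) :=
  toLex (Sum.elim (fun i => (false, toLex (w.2, (i.rev : ℕ))))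
    (fun j => (true, toLex (w.2, (j : ℕ)))) w.1)

/-- `v` is the lead (highest ranked derivative w.r.t. `R*`) of `g`. -/
def IsLead {A : Type} [CommSemiring A] (g : MvPolynomial (Vr n) A) (v : Vr n) : Prop :=
  v ∈ g.vars ∧ ∀ w ∈ g.vars, rkk w ≤ rkk v

/-- A system `𝒫(X,U)` of `n` linear differential polynomial parametric equations
`xᵢ = Pᵢ(U) = aᵢ - Hᵢ(U)` in `n-1` differential parameters, over an ordinary
differential field `(K, der)`;  `D` is the induced derivation on `K{X ∪ U}`.
`Fᵢ = xᵢ - aᵢ + Hᵢ(U)`. -/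
structure Sys (K : Type) [Field K] (n : ℕ) where
  hn : 2 ≤ n
  der : Derivation ℤ K K
  D : Derivation ℤ (R K n) (R K n)
  hD_C : ∀ c : K, D (C c) = C (der c)
  hD_X : ∀ (v : Fin n ⊕ Fin (n - 1)) (k : ℕ), D (X (v, k)) = X (v, k + 1)
  a : Fin n → K
  H : Fin n → R K n
  H_hom : ∀ i, (H i).IsHomogeneous 1
  H_u : ∀ i, uOnly (H i)
  H_ne : ∃ i, H i ≠ 0
  param : ∀ j : Fin (n - 1), ∃ i, 0 ≤ ordIn (H i) (Sum.inr j)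

namespace Sys

/-- `Fᵢ = xᵢ - aᵢ + Hᵢ(U)`. -/
noncomputable def F (S : Sys K n) (i : Fin n) : R K n :=
  X (Sum.inl i, 0) - C (S.a i) + S.H i

/-- `oᵢ = ord(Fᵢ)`. -/
noncomputable def o (S : Sys K n) (i : Fin n) : ℕ := ordTot (S.F i)

/-- `γⱼ = min_i (oᵢ - ord(Fᵢ, uⱼ))`. -/
noncomputable def gamZ (S : Sys K n) (j : Fin (n - 1)) : ℤ :=
  (Finset.univ : Finset (Fin n)).inf' ⟨⟨0, by have h := S.hn; omega⟩, Finset.mem_univ _⟩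
    fun i => (S.o i : ℤ) - ordIn (S.F i) (Sum.inr j)

noncomputable def gam (S : Sys K n) (j : Fin (n - 1)) : ℕ := (S.gamZ j).toNat

/-- `N = ∑ oᵢ`. -/
noncomputable def Nn (S : Sys K n) : ℕ := ∑ i, S.o i

/-- The completeness index `γ = ∑ γⱼ`. -/
noncomputable def gamT (S : Sys K n) : ℕ := ∑ j, S.gam j

/-- `L = ∑ (N - oᵢ - γ + 1)`. -/
noncomputable def L (S : Sys K n) : ℕ := ∑ i, (S.Nn - S.o i - S.gamT + 1)

/-- `Lʰ = ∑ (N - oᵢ - γ)`. -/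
noncomputable def Lh (S : Sys K n) : ℕ := ∑ i, (S.Nn - S.o i - S.gamT)

/-- The set `PS = {∂^k Fᵢ ∣ 0 ≤ k ≤ N - oᵢ - γ}`. -/
def PSset (S : Sys K n) : Set (R K n) :=
  {g | ∃ i k, k ≤ S.Nn - S.o i - S.gamT ∧ g = (⇑S.D)^[k] (S.F i)}

/-- `f` belongs to the polynomial subring `K[𝒳][𝒱]`. -/
def inXV (S : Sys K n) {A : Type} [CommSemiring A] (f : MvPolynomial (Vr n) A) : Prop :=
  ∀ w ∈ f.vars,
    Sum.elim (fun i => w.2 ≤ S.Nn - S.o i - S.gamT)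
      (fun j => w.2 ≤ S.Nn - S.gam j - S.gamT) w.1

/-- Membership in the ideal `(PS)` generated by `PS` in `K[𝒳][𝒱]`. -/
def PSIdealMem (S : Sys K n) (f : R K n) : Prop :=
  f ∈ Ideal.span S.PSset ∧ S.inXV f

/-- Substitution `x_{ik} ↦ ∂^k(Pᵢ(U))` defining the implicit ideal. -/
noncomputable def subst (S : Sys K n) : R K n →ₐ[K] R K n :=
  aeval fun w =>
    Sum.elim (fun i => (⇑S.D)^[w.2] (C (S.a i) - S.H i)) (fun j => X (Sum.inr j, w.2)) w.1

/-- Membership in the implicit ideal `ID = {f ∈ K{X} ∣ f(P₁(U),…,Pₙ(U)) = 0}`. -/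
def memID (S : Sys K n) (f : R K n) : Prop := xOnly f ∧ S.subst f = 0

/-- Membership in the differential ideal `[A]` of `K{X}` generated by `A ∈ K{X}`. -/
def memDiffSpanX (S : Sys K n) (A f : R K n) : Prop :=
  xOnly f ∧ f ∈ Ideal.span {g | ∃ k, g = (⇑S.D)^[k] A}

/-- `dim ID = n - 1`: the implicit ideal has a characteristic set `{A}` with `A`
a nonzero linear differential polynomial, i.e. `ID = [A]`. -/
def DimFull (S : Sys K n) : Prop :=
  ∃ A : R K n, A ≠ 0 ∧ IsLinearPoly A ∧ xOnly A ∧ ∀ f, (S.memID f ↔ S.memDiffSpanX A f)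

/-- The action of a linear differential operator `Lop = ∑ cₖ ∂^k ∈ K[∂]` on `f`. -/
noncomputable def applyOp (S : Sys K n) (Lop : Polynomial K) (f : R K n) : R K n :=
  ∑ k ∈ Lop.support, C (Lop.coeff k) * (⇑S.D)^[k] f

/-- `Lop` is a left divisor of `Fop` in `K[∂]`. -/
def leftDvd (S : Sys K n) (Lop Fop : Polynomial K) : Prop :=
  ∃ Mop : Polynomial K, ∀ f : R K n, S.applyOp Fop f = S.applyOp Lop (S.applyOp Mop f)

/-- For `B ∈ ID` linear, written `B = ∑ 𝓕ᵢ(xᵢ - aᵢ)`: the operator `𝓕ᵢ ∈ K[∂]`. -/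
noncomputable def opOf (S : Sys K n) (B : R K n) (i : Fin n) : Polynomial K :=
  ∑ k ∈ Finset.range (ordTot B + 1), Polynomial.monomial k (cf B (Sum.inl i) k)

/-- `B` is `ID`-primitive: the greatest common left divisor of `𝓕₁,…,𝓕ₙ` lies in `K`. -/
def IDPrimitive (S : Sys K n) (B : R K n) : Prop :=
  ∀ Lop : Polynomial K, (∀ i, S.leftDvd Lop (S.opOf B i)) → Lop.natDegree = 0

/-- `B'` is an `ID`-primitive part of `B`:  `𝓕ᵢ = IDcont(B)·𝓛ᵢ` with `𝓛₁,…,𝓛ₙ`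
coprime and `B' = ∑ 𝓛ᵢ(xᵢ - aᵢ)`. -/
def IsIDPrimPart (S : Sys K n) (B B' : R K n) : Prop :=
  ∃ (Lop : Polynomial K) (Lfam : Fin n → Polynomial K),
    (∀ i f, S.applyOp (S.opOf B i) f = S.applyOp Lop (S.applyOp (Lfam i) f)) ∧
    (∀ Q : Polynomial K, (∀ i, S.leftDvd Q (Lfam i)) → Q.natDegree = 0) ∧
    B' = ∑ i, S.applyOp (Lfam i) (X (Sum.inl i, 0) - C (S.a i))

/-- The co-order of `B` in `(PS)`: the greatest `c` with `∂^c B ∈ (PS)`. -/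
noncomputable def coOrd (S : Sys K n) (B : R K n) : ℕ :=
  sSup {c : ℕ | S.PSIdealMem ((⇑S.D)^[c] B)}

/-- The leading coefficients vector `l(B) = (α₁,…,αₙ)`, `αᵢ` the coefficient of
`∂^{N - oᵢ - γ - c(B)}` in `𝓕ᵢ`. -/
noncomputable def lvec (S : Sys K n) (B : R K n) : Fin n → K :=
  fun i => cf B (Sum.inl i) (S.Nn - S.o i - S.gamT - S.coOrd B)

/-- The leading matrix `S` of the system: entry `(i,j)` is the coefficient of
`u_{n-j, oᵢ - γ_{n-j}}` in `Fᵢ`. -/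
noncomputable def Smat (S : Sys K n) : Matrix (Fin n) (Fin (n - 1)) K :=
  Matrix.of fun i j =>
    if S.gam j.rev ≤ S.o i then cf (S.F i) (Sum.inr j.rev) (S.o i - S.gam j.rev) else 0

/-- Row indices of the complete differential resultant matrix `M(L)`. -/
abbrev RI (S : Sys K n) := (i : Fin n) × Fin (S.Nn - S.o i - S.gamT + 1)

/-- Column indices corresponding to the variables `𝒱`. -/
abbrev CI (S : Sys K n) := (j : Fin (n - 1)) × Fin (S.Nn - S.gam j - S.gamT + 1)

/-- The principal matrix `M_{L-1}` of the system. -/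
noncomputable def Mprin (S : Sys K n) : Matrix S.RI S.CI K :=
  Matrix.of fun ik jm => cf ((⇑S.D)^[(ik.2 : ℕ)] (S.F ik.1)) (Sum.inr jm.1) (jm.2 : ℕ)

/-- The complete differential resultant matrix `M(L)` (last column holds the parts
`x_{ik} - ∂^k aᵢ`). -/
noncomputable def Mfull (S : Sys K n) : Matrix S.RI (S.CI ⊕ Unit) (R K n) :=
  Matrix.of fun ik c =>
    Sum.elim
      (fun jm => (C (cf ((⇑S.D)^[(ik.2 : ℕ)] (S.F ik.1)) (Sum.inr jm.1) (jm.2 : ℕ)) : R K n))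
      (fun _ => X (Sum.inl ik.1, (ik.2 : ℕ)) - C ((⇑S.der)^[(ik.2 : ℕ)] (S.a ik.1))) c

/-- The linear complete differential resultant `∂CRes(F₁,…,Fₙ) = det M(L)`. -/
noncomputable def dCRes (S : Sys K n) : R K n :=
  if h : Fintype.card (S.CI ⊕ Unit) = Fintype.card S.RI then
    (S.Mfull.submatrix (Fintype.equivOfCardEq h) id).det
  else 0

/-- `G` is the (reduced) Groebner basis associated to the system `𝒫(X,U)`,
w.r.t. the lex monomial order induced by the ranking `R*`. -/
def IsAssocGB (S : Sys K n) (G : Finset (R K n)) : Prop :=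
  (∀ g ∈ G, g ≠ 0 ∧ IsLinearPoly g ∧ S.inXV g ∧ g ∈ Ideal.span S.PSset) ∧
  Ideal.span (G : Set (R K n)) = Ideal.span S.PSset ∧
  (∀ g ∈ G, ∃ v : Vr n, IsLead g v ∧ cf g v.1 v.2 = 1 ∧ ∀ g' ∈ G, g' ≠ g → v ∉ g'.vars) ∧
  (∀ f : R K n, f ∈ Ideal.span S.PSset → S.inXV f → IsLinearPoly f → f ≠ 0 →
    ∃ g ∈ G, ∃ v : Vr n, IsLead g v ∧ IsLead f v)

end Sys

/-- `G₀ = G ∩ K{X}`. -/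
noncomputable def G0 (G : Finset (R K n)) : Finset (R K n) :=
  @Finset.filter _ (fun g => xOnly g) (Classical.decPred _) G

section Aux
open Sys
variable {K : Type} [Field K] {n : ℕ}

theorem cf_add (f g : R K n) (v : Fin n ⊕ Fin (n-1)) (k : ℕ) :
    cf (f + g) v k = cf f v k + cf g v k := coeff_add _ _ _

theorem cf_sub (f g : R K n) (v : Fin n ⊕ Fin (n-1)) (k : ℕ) :
    cf (f - g) v k = cf f v k - cf g v k := by simp [cf, coeff_sub]

theorem cf_smul (c : K) (f : R K n) (v : Fin n ⊕ Fin (n-1)) (k : ℕ) :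
    cf (c • f) v k = c * cf f v k := coeff_smul _ _ _

theorem cf_zero (v : Fin n ⊕ Fin (n-1)) (k : ℕ) : cf (0 : R K n) v k = 0 := rfl

theorem cf_C (c : K) (v : Fin n ⊕ Fin (n-1)) (k : ℕ) : cf (C c : R K n) v k = 0 := by
  rw [cf, coeff_C, if_neg]
  exact fun h => one_ne_zero (Finsupp.single_eq_zero.mp h.symm)

theorem mem_vars_of_cf {f : R K n} {w : Vr n} (h : cf f w.1 w.2 ≠ 0) : w ∈ f.vars := by
  rw [mem_vars]
  refine ⟨Finsupp.single (w.1, w.2) 1, mem_support_iff.mpr h, ?_⟩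
  rw [Finsupp.mem_support_iff, Finsupp.single_apply, if_pos rfl]
  exact one_ne_zero

theorem cf_eq_zero_of_not_mem_vars {f : R K n} {w : Vr n} (h : w ∉ f.vars) :
    cf f w.1 w.2 = 0 := by
  by_contra hc; exact h (mem_vars_of_cf hc)

theorem eq_single_of_sum_le_one {α : Type*} {s : α →₀ ℕ} (h : s.sum (fun _ e => e) ≤ 1)
    (hne : s ≠ 0) : ∃ w, s = Finsupp.single w 1 := by
  classical
  obtain ⟨w, hw⟩ := Finsupp.support_nonempty_iff.mpr hne
  refine ⟨w, ?_⟩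
  have hws : s w ≠ 0 := Finsupp.mem_support_iff.mp hw
  have hsum : ∑ a ∈ s.support, s a ≤ 1 := h
  ext a
  rcases eq_or_ne a w with rfl | hne'
  · have h1 : s a ≤ ∑ b ∈ s.support, s b :=
      Finset.single_le_sum (fun _ _ => Nat.zero_le _) hw
    rw [Finsupp.single_eq_same]
    omega
  · rw [Finsupp.single_eq_of_ne' (fun hh => hne' hh.symm)]
    by_contra ha
    have haw : a ∈ s.support := Finsupp.mem_support_iff.mpr ha
    have hsub : ({w, a} : Finset α) ⊆ s.support := by
      intro x hx
      rcases Finset.mem_insert.mp hx with rfl | hx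
      · exact hw
      · rw [Finset.mem_singleton.mp hx]; exact haw
    have h2 : ∑ b ∈ ({w, a} : Finset α), s b ≤ ∑ b ∈ s.support, s b :=
      Finset.sum_le_sum_of_subset hsub
    rw [Finset.sum_pair (fun hh => hne' hh.symm)] at h2
    omega

theorem cf_ne_zero_of_mem_vars {f : R K n} (hf : IsLinearPoly f) {w : Vr n}
    (h : w ∈ f.vars) : cf f w.1 w.2 ≠ 0 := by
  obtain ⟨d, hd, hwd⟩ := (mem_vars _).mp h
  have hle : d.sum (fun _ e => e) ≤ 1 := le_trans (le_totalDegree hd) hf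
  have hdne : d ≠ 0 := by
    intro h0; rw [h0] at hwd; simp at hwd
  obtain ⟨w', hw'⟩ := eq_single_of_sum_le_one hle hdne
  have : w' = w := by
    rw [hw'] at hwd
    have := Finsupp.mem_support_iff.mp hwd
    by_contra hne
    rw [Finsupp.single_eq_of_ne' hne] at this; exact this rfl
  rw [← this] at *
  rw [cf]
  have : Finsupp.single (w'.1, w'.2) 1 = d := by rw [hw']
  rw [this]
  exact mem_support_iff.mp hd

end Aux
section Aux2
open Sys
variable {K : Type} [Field K] {n : ℕ}

theorem le_ordIn_of_cf {f : R K n} {v : Fin n ⊕ Fin (n-1)} {m : ℕ} (h : cf f v m ≠ 0) :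
    (m : ℤ) ≤ ordIn f v := by
  classical
  have hv : ((v, m) : Vr n) ∈ f.vars := mem_vars_of_cf (w := (v, m)) h
  have hmem : (m : ℤ) ∈ (f.vars.filter (fun w => w.1 = v)).image (fun w => (w.2 : ℤ)) := by
    refine Finset.mem_image.mpr ⟨(v, m), Finset.mem_filter.mpr ⟨hv, rfl⟩, rfl⟩
  have hle := Finset.le_max hmem
  rw [ordIn]
  cases hmax : ((f.vars.filter (fun w => w.1 = v)).image (fun w => (w.2 : ℤ))).max with
  | bot => rw [hmax] at hle; exact absurd hle (by simp)
  | coe b => rw [hmax] at hle; simpa using hle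

theorem cf_eq_zero_of_ordIn_lt {f : R K n} {v : Fin n ⊕ Fin (n-1)} {m : ℕ}
    (h : ordIn f v < (m : ℤ)) : cf f v m = 0 := by
  by_contra hc; exact absurd (le_ordIn_of_cf hc) (not_le.mpr h)

theorem neg_one_le_ordIn (f : R K n) (v : Fin n ⊕ Fin (n-1)) : -1 ≤ ordIn f v := by
  rw [ordIn]
  cases hmax : ((f.vars.filter (fun w => w.1 = v)).image (fun w => (w.2 : ℤ))).max with
  | bot => simp
  | coe b =>
    have hb := Finset.mem_of_max hmax
    obtain ⟨w, _, hw⟩ := Finset.mem_image.mp hb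
    simp only [WithBot.unbotD_coe]
    omega

theorem le_ordTot_of_mem_vars {f : R K n} {w : Vr n} (h : w ∈ f.vars) : w.2 ≤ ordTot f := by
  have hmem : w.2 ∈ f.vars.image Prod.snd := Finset.mem_image.mpr ⟨w, h, rfl⟩
  have hle := Finset.le_max hmem
  rw [ordTot]
  cases hmax : (f.vars.image Prod.snd).max with
  | bot => rw [hmax] at hle; exact absurd hle (by simp)
  | coe b => rw [hmax] at hle; simpa using hle

theorem cf_eq_zero_of_ordTot_lt {f : R K n} {v : Fin n ⊕ Fin (n-1)} {m : ℕ}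
    (h : ordTot f < m) : cf f v m = 0 := by
  by_contra hc
  exact absurd (le_ordTot_of_mem_vars (mem_vars_of_cf (w := (v,m)) hc)) (not_le.mpr h)

theorem ordIn_le_ordTot (f : R K n) (v : Fin n ⊕ Fin (n-1)) : ordIn f v ≤ (ordTot f : ℤ) := by
  rw [ordIn]
  cases hmax : ((f.vars.filter (fun w => w.1 = v)).image (fun w => (w.2 : ℤ))).max with
  | bot => simp
  | coe b =>
    have hb := Finset.mem_of_max hmax
    obtain ⟨w, hw, hwb⟩ := Finset.mem_image.mp hb
    have := le_ordTot_of_mem_vars (Finset.mem_filter.mp hw).1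
    simp only [WithBot.unbotD_coe]
    omega

variable (S : Sys K n)

theorem D_add (f g : R K n) : S.D (f + g) = S.D f + S.D g := map_add _ _ _

theorem Dit_add (k : ℕ) (f g : R K n) :
    (⇑S.D)^[k] (f + g) = (⇑S.D)^[k] f + (⇑S.D)^[k] g := by
  induction k generalizing f g with
  | zero => rfl
  | succ k ih => rw [Function.iterate_succ_apply, map_add, ih, ← Function.iterate_succ_apply, ← Function.iterate_succ_apply]

theorem Dit_zero (k : ℕ) : (⇑S.D)^[k] (0 : R K n) = 0 := by
  induction k with
  | zero => rfl
  | succ k ih => rw [Function.iterate_succ_apply, map_zero, ih]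


theorem Dit_sub (k : ℕ) (f g : R K n) :
    (⇑S.D)^[k] (f - g) = (⇑S.D)^[k] f - (⇑S.D)^[k] g := by
  induction k generalizing f g with
  | zero => rfl
  | succ k ih => rw [Function.iterate_succ_apply, map_sub, ih, ← Function.iterate_succ_apply, ← Function.iterate_succ_apply]

theorem Dit_X (v : Fin n ⊕ Fin (n-1)) (m k : ℕ) :
    (⇑S.D)^[k] (X (v, m) : R K n) = X (v, m + k) := by
  induction k with
  | zero => rfl
  | succ k ih => rw [Function.iterate_succ_apply', ih, S.hD_X, Nat.add_assoc]

theorem Dit_C (c : K) (k : ℕ) :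
    (⇑S.D)^[k] (C c : R K n) = C ((⇑S.der)^[k] c) := by
  induction k generalizing c with
  | zero => rfl
  | succ k ih => rw [Function.iterate_succ_apply, S.hD_C, ih, Function.iterate_succ_apply]

theorem D_smul (c : K) (f : R K n) : S.D (c • f) = S.der c • f + c • S.D f := by
  rw [smul_eq_C_mul, Derivation.leibniz, smul_eq_mul, smul_eq_mul, S.hD_C,
    smul_eq_C_mul, smul_eq_C_mul]
  ring

theorem cf_mul_X (p : R K n) (w : Vr n) (v : Fin n ⊕ Fin (n-1)) (k : ℕ) :
    cf (p * X w) v k = if w = (v, k) then constantCoeff p else 0 := by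
  classical
  rw [cf, coeff_mul_X']
  by_cases h : w = (v, k)
  · subst h
    rw [if_pos, if_pos rfl]
    · rw [show (Finsupp.single ((v,k) : Vr n) 1 - Finsupp.single (v,k) 1) = 0 from tsub_self _,
        constantCoeff_eq]
    · rw [Finsupp.support_single_ne_zero _ one_ne_zero]
      exact Finset.mem_singleton_self _
  · rw [if_neg, if_neg h]
    intro hc
    rw [Finsupp.support_single_ne_zero _ one_ne_zero] at hc
    exact h (Finset.mem_singleton.mp hc)

end Aux2
section Aux3
open Sys
variable {K : Type} [Field K] {n : ℕ} (S : Sys K n)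

theorem D_mul_X (p : R K n) (w : Vr n) :
    S.D (p * X w) = p * X (w.1, w.2 + 1) + X w * S.D p := by
  have h : S.D (X w) = X (w.1, w.2 + 1) := by
    obtain ⟨wv, wk⟩ := w; exact S.hD_X wv wk
  rw [Derivation.leibniz, smul_eq_mul, smul_eq_mul, h]

theorem cc_D (f : R K n) : constantCoeff (S.D f) = S.der (constantCoeff f) := by
  induction f using MvPolynomial.induction_on with
  | C c => rw [S.hD_C, constantCoeff_C, constantCoeff_C]
  | add p q hp hq => rw [map_add, map_add, hp, hq, map_add, map_add]
  | mul_X p w hp =>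
    rw [D_mul_X, map_add, map_mul, map_mul, map_mul, constantCoeff_X]
    simp

theorem cf_D (f : R K n) (v : Fin n ⊕ Fin (n-1)) (m : ℕ) :
    cf (S.D f) v m = S.der (cf f v m) + (if m = 0 then 0 else cf f v (m - 1)) := by
  induction f using MvPolynomial.induction_on generalizing v m with
  | C c =>
    simp [S.hD_C, cf_C]
  | add p q hp hq =>
    rw [map_add, cf_add, cf_add, hp, hq]
    split_ifs
    · rw [map_add]; ring
    · rw [map_add, cf_add]; ring
  | mul_X p w hp =>
    obtain ⟨wv, wk⟩ := w
    clear hp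
    rw [D_mul_X, cf_add, cf_mul_X, mul_comm (X ((wv, wk) : Vr n)) (S.D p), cf_mul_X,
      cf_mul_X, cc_D, cf_mul_X]
    split_ifs <;> (try simp only [Prod.ext_iff] at *) <;> (try subst_vars) <;> (try simp_all) <;> first | ring1 | omega | (exfalso; omega) | (exfalso; obtain ⟨-, hco⟩ := ‹_ ∧ _›; omega)
end Aux3
section Aux4
open Sys
variable {K : Type} [Field K] {n : ℕ} (S : Sys K n)

theorem cf_Dit_vanish {f : R K n} {v : Fin n ⊕ Fin (n-1)} {M : ℤ}
    (hv : ∀ m : ℕ, M < (m:ℤ) → cf f v m = 0) :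
    ∀ (k m : ℕ), M + k < (m:ℤ) → cf ((⇑S.D)^[k] f) v m = 0 := by
  intro k
  induction k with
  | zero => intro m hm; exact hv m (by omega)
  | succ k ih =>
    intro m hm
    rw [Function.iterate_succ_apply', cf_D]
    rw [ih m (by push_cast at hm ⊢; omega), map_zero, zero_add]
    split_ifs with h0
    · rfl
    · exact ih (m-1) (by omega)

theorem cf_Dit_vanish' {f : R K n} {v : Fin n ⊕ Fin (n-1)}
    (hv : ∀ m : ℕ, cf f v m = 0) (k m : ℕ) :
    cf ((⇑S.D)^[k] f) v m = 0 := by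
  induction k generalizing m with
  | zero => exact hv m
  | succ k ih =>
    rw [Function.iterate_succ_apply', cf_D]
    simp [ih]

theorem cf_Dit_top {f : R K n} {v : Fin n ⊕ Fin (n-1)} {M : ℕ}
    (hv : ∀ m : ℕ, M < m → cf f v m = 0) (k : ℕ) :
    cf ((⇑S.D)^[k] f) v (M + k) = cf f v M := by
  induction k with
  | zero => rfl
  | succ k ih =>
    rw [Function.iterate_succ_apply', cf_D]
    have h1 : cf ((⇑S.D)^[k] f) v (M + (k+1)) = 0 := by
      refine cf_Dit_vanish S (M := (M:ℤ)) (fun m hm => hv m (by omega)) k _ (by push_cast; omega)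
    rw [h1, map_zero, zero_add, if_neg (by omega : ¬ M + (k+1) = 0)]
    have h2 : M + (k+1) - 1 = M + k := by omega
    rw [h2, ih]

theorem cf_D_down1 {f : R K n} {v : Fin n ⊕ Fin (n-1)} {M : ℤ}
    (hv : ∀ m : ℕ, M + 1 < (m:ℤ) → cf (S.D f) v m = 0) :
    ∀ m : ℕ, M < (m:ℤ) → cf f v m = 0 := by
  have key : ∀ (t m : ℕ), M < (m:ℤ) → ordTot f + 1 ≤ m + t → cf f v m = 0 := by
    intro t
    induction t with
    | zero => intro m hm ht; exact cf_eq_zero_of_ordTot_lt (by omega)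
    | succ t ih =>
      intro m hm ht
      by_cases hcase : ordTot f + 1 ≤ m + t
      · exact ih m hm hcase
      · have h1 : cf f v (m+1) = 0 := ih (m+1) (by omega) (by omega)
        have h2 := hv (m+1) (by omega)
        rw [cf_D, if_neg (Nat.succ_ne_zero m)] at h2
        simp only [Nat.add_sub_cancel] at h2
        rw [h1, map_zero, zero_add] at h2
        exact h2
  intro m hm
  exact key (ordTot f + 1) m hm (by omega)

theorem cf_Dit_down {f : R K n} {v : Fin n ⊕ Fin (n-1)} {M : ℤ} (k : ℕ)
    (hv : ∀ m : ℕ, M + k < (m:ℤ) → cf ((⇑S.D)^[k] f) v m = 0) :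
    ∀ m : ℕ, M < (m:ℤ) → cf f v m = 0 := by
  induction k generalizing f M with
  | zero => intro m hm; exact (by simpa using hv m (by omega))
  | succ k ih =>
    have h1 : ∀ m : ℕ, (M + 1) + k < (m:ℤ) → cf ((⇑S.D)^[k] (S.D f)) v m = 0 := by
      intro m hm
      rw [← Function.iterate_succ_apply]
      exact hv m (by push_cast at hm ⊢; omega)
    exact cf_D_down1 S (ih h1)

theorem lin_D {f : R K n} (hf : IsLinearPoly f) : IsLinearPoly (S.D f) := by
  rw [IsLinearPoly] at *
  have hrw : S.D f = ∑ s ∈ f.support, S.D (monomial s (coeff s f)) := by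
    conv_lhs => rw [f.as_sum]
    exact map_sum S.D _ _
  rw [hrw]
  refine le_trans (totalDegree_finset_sum _ _) (Finset.sup_le ?_)
  intro s hs
  rcases eq_or_ne s 0 with rfl | hsne
  · rw [show monomial (0 : Vr n →₀ ℕ) (coeff 0 f) = C (coeff 0 f) by
      rw [← monomial_zero']]
    rw [S.hD_C, totalDegree_C]
    omega
  · obtain ⟨w, rfl⟩ := eq_single_of_sum_le_one (le_trans (le_totalDegree hs) hf) hsne
    rw [← C_mul_X_eq_monomial, D_mul_X]
    refine le_trans (totalDegree_add _ _) (max_le ?_ ?_)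
    · refine le_trans (totalDegree_mul _ _) ?_
      rw [totalDegree_C]
      exact le_trans (le_of_eq (zero_add _)) (totalDegree_X _).le
    · refine le_trans (totalDegree_mul _ _) ?_
      rw [S.hD_C, totalDegree_C]
      exact le_trans (le_of_eq (add_zero _)) (totalDegree_X _).le

theorem lin_Dit {f : R K n} (hf : IsLinearPoly f) (k : ℕ) :
    IsLinearPoly ((⇑S.D)^[k] f) := by
  induction k with
  | zero => exact hf
  | succ k ih => rw [Function.iterate_succ_apply']; exact lin_D S ih

end Aux4
section Aux5
open Sys
variable {K : Type} [Field K] {n : ℕ} (S : Sys K n)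

theorem lin_add {f g : R K n} (hf : IsLinearPoly f) (hg : IsLinearPoly g) :
    IsLinearPoly (f + g) := le_trans (totalDegree_add f g) (max_le hf hg)

theorem lin_neg {f : R K n} (hf : IsLinearPoly f) : IsLinearPoly (-f) := by
  rw [IsLinearPoly, totalDegree_neg]; exact hf

theorem lin_sub {f g : R K n} (hf : IsLinearPoly f) (hg : IsLinearPoly g) :
    IsLinearPoly (f - g) := by
  rw [sub_eq_add_neg]; exact lin_add hf (lin_neg hg)

theorem lin_smul {c : K} {f : R K n} (hf : IsLinearPoly f) : IsLinearPoly (c • f) :=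
  le_trans (totalDegree_smul_le c f) hf

theorem lin_sum {ι : Type*} (s : Finset ι) (f : ι → R K n)
    (hf : ∀ i ∈ s, IsLinearPoly (f i)) : IsLinearPoly (∑ i ∈ s, f i) :=
  le_trans (totalDegree_finset_sum s f) (Finset.sup_le hf)

theorem lin_X (w : Vr n) : IsLinearPoly (X w : R K n) := (totalDegree_X w).le

theorem lin_C (c : K) : IsLinearPoly (C c : R K n) := by
  rw [IsLinearPoly, totalDegree_C]; omega

theorem lin_H (i : Fin n) : IsLinearPoly (S.H i) := by
  rcases eq_or_ne (S.H i) 0 with h0 | hne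
  · rw [h0, IsLinearPoly, totalDegree_zero]; omega
  · exact le_of_eq ((S.H_hom i).totalDegree hne)

theorem lin_F (i : Fin n) : IsLinearPoly (S.F i) :=
  lin_add (lin_sub (lin_X _) (lin_C _)) (lin_H S i)

theorem cf_sum {ι : Type*} (s : Finset ι) (f : ι → R K n) (v : Fin n ⊕ Fin (n-1)) (k : ℕ) :
    cf (∑ i ∈ s, f i) v k = ∑ i ∈ s, cf (f i) v k := coeff_sum s f _

theorem FX (i : Fin n) : S.F i = X (Sum.inl i, 0) + (S.H i - C (S.a i)) := by
  rw [Sys.F]; ring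

theorem cf_HC_left (i : Fin n) (i' : Fin n) (m : ℕ) :
    cf (S.H i - C (S.a i)) (Sum.inl i') m = 0 := by
  rw [cf_sub, cf_C, sub_zero]
  by_contra hc
  have := S.H_u i _ (mem_vars_of_cf (w := (Sum.inl i', m)) hc)
  simp at this

theorem DitF (i : Fin n) (k : ℕ) :
    (⇑S.D)^[k] (S.F i) = X (Sum.inl i, k) + (⇑S.D)^[k] (S.H i - C (S.a i)) := by
  rw [FX, Dit_add, Dit_X, Nat.zero_add]

theorem cf_DitF_x (i' : Fin n) (k' : ℕ) (i : Fin n) (k : ℕ) :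
    cf ((⇑S.D)^[k'] (S.F i')) (Sum.inl i) k = if i' = i ∧ k' = k then 1 else 0 := by
  classical
  rw [DitF, cf_add, cf_Dit_vanish' S (fun m => cf_HC_left S i' i m) k' k, add_zero]
  rw [cf, coeff_X']
  congr 1
  rw [Finsupp.single_eq_single_iff]
  simp [Prod.ext_iff, eq_comm, and_comm]

theorem cf_DitF_u_van (i : Fin n) (j : Fin (n-1)) (k m : ℕ)
    (h : ordIn (S.F i) (Sum.inr j) + k < (m:ℤ)) :
    cf ((⇑S.D)^[k] (S.F i)) (Sum.inr j) m = 0 :=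
  cf_Dit_vanish S (fun _ hm => cf_eq_zero_of_ordIn_lt hm) k m h

theorem gamZ_nonneg (j : Fin (n-1)) : 0 ≤ S.gamZ j := by
  rw [Sys.gamZ]
  apply Finset.le_inf'
  intro i _
  have h := ordIn_le_ordTot (S.F i) (Sum.inr j)
  have : S.o i = ordTot (S.F i) := rfl
  omega

theorem gam_cast (j : Fin (n-1)) : (S.gam j : ℤ) = S.gamZ j :=
  Int.toNat_of_nonneg (gamZ_nonneg S j)

theorem gam_le (j : Fin (n-1)) (i : Fin n) :
    (S.gam j : ℤ) ≤ (S.o i : ℤ) - ordIn (S.F i) (Sum.inr j) := by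
  rw [gam_cast, Sys.gamZ]
  exact Finset.inf'_le _ (Finset.mem_univ i)

theorem ordInF_le (i : Fin n) (j : Fin (n-1)) :
    ordIn (S.F i) (Sum.inr j) ≤ (S.o i : ℤ) - S.gam j := by
  have := gam_le S j i; omega

theorem cf_DitF_u_top (i : Fin n) (j : Fin (n-1)) (k : ℕ) (hg : S.gam j ≤ S.o i) :
    cf ((⇑S.D)^[k] (S.F i)) (Sum.inr j) (S.o i - S.gam j + k)
      = cf (S.F i) (Sum.inr j) (S.o i - S.gam j) := by
  refine cf_Dit_top S (fun m hm => cf_eq_zero_of_ordIn_lt ?_) k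
  have h1 := ordInF_le S i j
  have h2 : ((S.o i - S.gam j : ℕ) : ℤ) = (S.o i : ℤ) - S.gam j := by omega
  omega

end Aux5
section Aux6
open Sys
variable {K : Type} [Field K] {n : ℕ} (S : Sys K n)

theorem aeval_fix (φ : Vr n → R K n) (f : R K n) (hf : ∀ w ∈ f.vars, φ w = X w) :
    aeval φ f = f := by
  calc aeval φ f = aeval φ (∑ s ∈ f.support, monomial s (coeff s f)) := by rw [← f.as_sum]
    _ = ∑ s ∈ f.support, aeval φ (monomial s (coeff s f)) := map_sum _ _ _
    _ = ∑ s ∈ f.support, monomial s (coeff s f) := ?_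
    _ = f := (f.as_sum).symm
  refine Finset.sum_congr rfl ?_
  intro s hs
  rw [aeval_monomial, monomial_eq]
  congr 1
  refine Finsupp.prod_congr ?_
  intro w hw
  rw [hf w ((mem_vars w).mpr ⟨s, hs, hw⟩)]

/-- The retraction substituting low-order `x`-derivatives. -/
noncomputable def rho : R K n →ₐ[K] R K n :=
  aeval (fun w => Sum.elim
    (fun i => if w.2 ≤ S.Nn - S.o i - S.gamT then (⇑S.D)^[w.2] (C (S.a i) - S.H i) else X w)
    (fun _ => X w) w.1)

theorem rho_X_low (i : Fin n) (k : ℕ) (hk : k ≤ S.Nn - S.o i - S.gamT) :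
    rho S (X (Sum.inl i, k)) = (⇑S.D)^[k] (C (S.a i) - S.H i) := by
  rw [rho, aeval_X]
  exact if_pos hk

theorem rho_fix_cond (f : R K n)
    (hf : ∀ w ∈ f.vars, ∀ i : Fin n, w.1 = Sum.inl i → ¬ (w.2 ≤ S.Nn - S.o i - S.gamT)) :
    rho S f = f := by
  rw [rho]
  refine aeval_fix _ f ?_
  intro w hw
  obtain ⟨wv, wk⟩ := w
  rcases hww : wv with i | j
  · subst hww
    simp only [Sum.elim_inl]
    rw [if_neg (hf _ hw i rfl)]
  · subst hww
    rfl

theorem rho_fix_of_right (f : R K n) (hf : IsLinearPoly f)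
    (hcf : ∀ i m, cf f (Sum.inl i) m = 0) : rho S f = f := by
  refine rho_fix_cond S f ?_
  intro w hw i hwi _
  have := cf_ne_zero_of_mem_vars hf hw
  rw [hwi] at this
  exact this (hcf i w.2)

theorem rho_PS (i : Fin n) (k : ℕ) (hk : k ≤ S.Nn - S.o i - S.gamT) :
    rho S ((⇑S.D)^[k] (S.F i)) = 0 := by
  rw [DitF, map_add, rho_X_low S i k hk]
  have hfix : rho S ((⇑S.D)^[k] (S.H i - C (S.a i))) = (⇑S.D)^[k] (S.H i - C (S.a i)) := by
    refine rho_fix_of_right S _ (lin_Dit S (lin_sub (lin_H S i) (lin_C _)) k) ?_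
    intro i' m
    exact cf_Dit_vanish' S (fun m' => cf_HC_left S i i' m') k m
  rw [hfix, ← Dit_add]
  rw [show C (S.a i) - S.H i + (S.H i - C (S.a i)) = 0 by ring, Dit_zero]

theorem rho_span {f : R K n} (hf : f ∈ Ideal.span S.PSset) : rho S f = 0 := by
  have hle : Ideal.span S.PSset ≤ RingHom.ker (rho S).toRingHom := by
    rw [Ideal.span_le]
    rintro g ⟨i, k, hk, rfl⟩
    exact RingHom.mem_ker.mpr (rho_PS S i k hk)
  exact RingHom.mem_ker.mp (hle hf)


theorem cf_rep (c : Fin n → ℕ → K) (i : Fin n) (k : ℕ) :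
    cf (∑ i', ∑ k' ∈ Finset.range (S.Nn - S.o i' - S.gamT + 1),
        c i' k' • (⇑S.D)^[k'] (S.F i')) (Sum.inl i) k
      = if k ≤ S.Nn - S.o i - S.gamT then c i k else 0 := by
  classical
  rw [cf_sum]
  have inner : ∀ i' : Fin n,
      cf (∑ k' ∈ Finset.range (S.Nn - S.o i' - S.gamT + 1),
        c i' k' • (⇑S.D)^[k'] (S.F i')) (Sum.inl i) k
      = if i' = i then (if k ≤ S.Nn - S.o i - S.gamT then c i k else 0) else 0 := by
    intro i'
    rw [cf_sum]
    by_cases hi : i' = i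
    · subst hi
      rw [if_pos rfl]
      have hterm : ∀ k' ∈ Finset.range (S.Nn - S.o i' - S.gamT + 1),
          c i' k' * cf ((⇑S.D)^[k'] (S.F i')) (Sum.inl i') k
          = if k' = k then c i' k' else 0 := by
        intro k' _
        rw [cf_DitF_x]
        by_cases hk' : k' = k
        · rw [if_pos ⟨rfl, hk'⟩, if_pos hk', mul_one]
        · rw [if_neg (by tauto), if_neg hk', mul_zero]
      calc _ = ∑ k' ∈ Finset.range (S.Nn - S.o i' - S.gamT + 1),
            (if k' = k then c i' k' else 0) := by
            refine Finset.sum_congr rfl ?_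
            intro k' hk'
            rw [← hterm k' hk', cf_smul]
        _ = _ := by
            rw [Finset.sum_ite_eq' (Finset.range (S.Nn - S.o i' - S.gamT + 1)) k]
            simp [Finset.mem_range, Nat.lt_succ_iff]
    · rw [if_neg hi]
      refine Finset.sum_eq_zero ?_
      intro k' _
      rw [cf_smul, cf_DitF_x, if_neg (by tauto), mul_zero]
  rw [Finset.sum_congr rfl (fun i' _ => inner i')]
  rw [Finset.sum_ite_eq' Finset.univ i]
  simp

theorem L1 {P : R K n} (hP : P ∈ Ideal.span S.PSset) (hlin : IsLinearPoly P) :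
    P = ∑ i, ∑ k ∈ Finset.range (S.Nn - S.o i - S.gamT + 1),
      cf P (Sum.inl i) k • (⇑S.D)^[k] (S.F i) := by
  classical
  set Pst := ∑ i, ∑ k ∈ Finset.range (S.Nn - S.o i - S.gamT + 1),
      cf P (Sum.inl i) k • (⇑S.D)^[k] (S.F i) with hPst
  have cfPst : ∀ i k, cf Pst (Sum.inl i) k
      = if k ≤ S.Nn - S.o i - S.gamT then cf P (Sum.inl i) k else 0 := by
    intro i k
    rw [hPst]
    exact cf_rep S (fun i' k' => cf P (Sum.inl i') k') i k
  have hPstlin : IsLinearPoly Pst :=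
    lin_sum _ _ (fun i _ => lin_sum _ _ (fun k _ => lin_smul (lin_Dit S (lin_F S i) k)))
  have hrhoPst : rho S Pst = 0 := by
    rw [hPst, map_sum]
    refine Finset.sum_eq_zero ?_
    intro i _
    rw [map_sum]
    refine Finset.sum_eq_zero ?_
    intro k hk
    rw [map_smul, rho_PS S i k (by simpa [Nat.lt_succ_iff] using hk), smul_zero]
  set Q := P - Pst with hQ
  have hQcf : ∀ i k, k ≤ S.Nn - S.o i - S.gamT → cf Q (Sum.inl i) k = 0 := by
    intro i k hk
    rw [hQ, cf_sub, cfPst, if_pos hk, sub_self]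
  have hQlin : IsLinearPoly Q := lin_sub hlin hPstlin
  have hQrho : rho S Q = 0 := by
    rw [hQ, map_sub, rho_span S hP, hrhoPst, sub_zero]
  have hQfix : rho S Q = Q := by
    refine rho_fix_cond S Q ?_
    intro w hw i hwi hle
    have hcfw := cf_ne_zero_of_mem_vars hQlin hw
    rw [hwi] at hcfw
    exact hcfw (hQcf i w.2 hle)
  have : Q = 0 := by rw [← hQfix, hQrho]
  have := sub_eq_zero.mp this
  exact this


theorem L1van {P : R K n} (hP : P ∈ Ideal.span S.PSset) (hlin : IsLinearPoly P) :
    ∀ (i : Fin n) (k : ℕ), S.Nn - S.o i - S.gamT < k → cf P (Sum.inl i) k = 0 := by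
  intro i k hk
  conv_lhs => rw [L1 S hP hlin]
  rw [cf_rep S (fun i' k' => cf P (Sum.inl i') k') i k, if_neg (by omega)]

end Aux6
section Aux7
open Sys
variable {K : Type} [Field K] {n : ℕ} (S : Sys K n)

/-- Generators at depth `t`. -/
def VtSet (t : ℕ) : Set (R K n) :=
  {g | ∃ i k, k + t ≤ S.Nn - S.o i - S.gamT ∧ g = (⇑S.D)^[k] (S.F i)}

theorem VtSet_mono {t t' : ℕ} (h : t' ≤ t) : VtSet S t ⊆ VtSet S t' := by
  rintro g ⟨i, k, hk, rfl⟩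
  exact ⟨i, k, by omega, rfl⟩

theorem D_Vt {t : ℕ} {f : R K n} (hf : f ∈ Submodule.span K (VtSet S (t+1))) :
    S.D f ∈ Submodule.span K (VtSet S t) := by
  induction hf using Submodule.span_induction with
  | mem g hg =>
    obtain ⟨i, k, hk, rfl⟩ := hg
    rw [← Function.iterate_succ_apply' (⇑S.D) k (S.F i)]
    exact Submodule.subset_span ⟨i, k+1, by omega, rfl⟩
  | zero => rw [map_zero]; exact Submodule.zero_mem _
  | add x y hx hy ihx ihy => rw [map_add]; exact Submodule.add_mem _ ihx ihy
  | smul c x hx ihx =>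
    rw [D_smul]
    refine Submodule.add_mem _ ?_ (Submodule.smul_mem _ _ ihx)
    refine Submodule.smul_mem _ _ ?_
    exact Submodule.span_mono (VtSet_mono S (by omega)) hx

theorem Dit_Vt {t c : ℕ} (hc : c ≤ t) {f : R K n} (hf : f ∈ Submodule.span K (VtSet S t)) :
    (⇑S.D)^[c] f ∈ Submodule.span K (VtSet S (t - c)) := by
  induction c generalizing f t with
  | zero => simpa using Submodule.span_mono (VtSet_mono S (by omega)) hf
  | succ c ih =>
    rw [Function.iterate_succ_apply]
    have h1 : S.D f ∈ Submodule.span K (VtSet S (t-1)) := by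
      have : t = (t-1)+1 := by omega
      exact D_Vt S (this ▸ hf)
    have := ih (t := t-1) (by omega) h1
    have heq : t - 1 - c = t - (c+1) := by omega
    rw [heq] at this
    exact this

theorem Vt_mem_ideal {t : ℕ} {f : R K n} (hf : f ∈ Submodule.span K (VtSet S t)) :
    f ∈ Ideal.span S.PSset := by
  have hle : Submodule.span K (VtSet S t) ≤ (Ideal.span S.PSset).restrictScalars K := by
    rw [Submodule.span_le]
    rintro g ⟨i, k, hk, rfl⟩
    exact Ideal.subset_span ⟨i, k, by omega, rfl⟩
  exact hle hf

theorem rep_mem_Vt {P : R K n} (hP : P ∈ Ideal.span S.PSset) (hlin : IsLinearPoly P) (t : ℕ)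
    (hvan : ∀ (i : Fin n) (k : ℕ), (S.Nn:ℤ) - S.o i - S.gamT - t < k → cf P (Sum.inl i) k = 0) :
    P ∈ Submodule.span K (VtSet S t) := by
  rw [L1 S hP hlin]
  refine Submodule.sum_mem _ ?_
  intro i _
  refine Submodule.sum_mem _ ?_
  intro k _
  by_cases hk : k + t ≤ S.Nn - S.o i - S.gamT
  · exact Submodule.smul_mem _ _ (Submodule.subset_span ⟨i, k, hk, rfl⟩)
  · rw [hvan i k (by omega), zero_smul]
    exact Submodule.zero_mem _

/-- The workhorse coefficient-extraction identity. -/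
theorem WORK {P : R K n} (hP : P ∈ Ideal.span S.PSset) (hlin : IsLinearPoly P) (s : ℤ)
    (hsc : ∀ (i : Fin n) (k : ℕ), (S.Nn:ℤ) - S.o i - S.gamT - s < k → cf P (Sum.inl i) k = 0)
    (j : Fin (n-1)) (M : ℕ) (hM : (M:ℤ) = (S.Nn:ℤ) - S.gamT - S.gam j - s) :
    cf P (Sum.inr j) M
      = ∑ i, (if 0 ≤ (S.Nn:ℤ) - S.o i - S.gamT - s then
          cf P (Sum.inl i) ((S.Nn:ℤ) - S.o i - S.gamT - s).toNat else 0)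
        * (if S.gam j ≤ S.o i then cf (S.F i) (Sum.inr j) (S.o i - S.gam j) else 0) := by
  classical
  conv_lhs => rw [L1 S hP hlin]
  rw [cf_sum]
  refine Finset.sum_congr rfl ?_
  intro i _
  rw [cf_sum]
  by_cases h0 : 0 ≤ (S.Nn:ℤ) - S.o i - S.gamT - s
  · set k₀ := ((S.Nn:ℤ) - S.o i - S.gamT - s).toNat with hk₀
    have hk₀Z : (k₀:ℤ) = (S.Nn:ℤ) - S.o i - S.gamT - s := Int.toNat_of_nonneg h0
    have hKZ : ((S.Nn - S.o i - S.gamT : ℕ) : ℤ) ≥ (S.Nn:ℤ) - S.o i - S.gamT := by omega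
    rw [Finset.sum_eq_single k₀]
    · rw [if_pos h0, cf_smul]
      congr 1
      by_cases hg : S.gam j ≤ S.o i
      · rw [if_pos hg]
        have hMk : M = (S.o i - S.gam j) + k₀ := by omega
        rw [hMk]
        exact cf_DitF_u_top S i j k₀ hg
      · rw [if_neg hg]
        refine cf_Dit_vanish' S ?_ k₀ M
        intro m
        refine cf_eq_zero_of_ordIn_lt ?_
        have h1 := ordInF_le S i j
        have h2 := neg_one_le_ordIn (S.F i) (Sum.inr j)
        omega
    · intro k hk hkne
      rw [cf_smul]
      have hkk : (k:ℤ) ≠ (S.Nn:ℤ) - S.o i - S.gamT - s := by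
        intro hc
        have : k = k₀ := by omega
        exact hkne this
      rcases lt_or_gt_of_ne hkk with h | h
      · have h1 := ordInF_le S i j
        rw [cf_DitF_u_van S i j k M (by omega), mul_zero]
      · rw [hsc i k (by omega), zero_mul]
    · intro hk₀mem
      rw [cf_smul]
      have : S.Nn - S.o i - S.gamT < k₀ := by
        rw [Finset.mem_range, Nat.lt_succ_iff] at hk₀mem
        omega
      rw [L1van S hP hlin i k₀ this, zero_mul]
  · rw [if_neg h0, zero_mul]
    refine Finset.sum_eq_zero ?_
    intro k _
    rw [cf_smul, hsc i k (by omega), zero_mul]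

end Aux7
section Aux8
open Sys
variable {K : Type} [Field K] {n : ℕ} (S : Sys K n)

theorem kern (hn : 2 ≤ n) (hrank : S.Smat.rank = n - 1) (a : Fin n → K) (ha0 : a ≠ 0)
    (ha : ∀ j, ∑ i, a i *
      (if S.gam j ≤ S.o i then cf (S.F i) (Sum.inr j) (S.o i - S.gam j) else 0) = 0)
    (w : Fin n → K)
    (hw : ∀ j, ∑ i, w i *
      (if S.gam j ≤ S.o i then cf (S.F i) (Sum.inr j) (S.o i - S.gam j) else 0) = 0) :
    ∃ lam : K, ∀ i, w i = lam * a i := by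
  classical
  set M := S.Smat.transpose with hM
  have hker : ∀ x : Fin n → K,
      (∀ j, ∑ i, x i *
        (if S.gam j ≤ S.o i then cf (S.F i) (Sum.inr j) (S.o i - S.gam j) else 0) = 0) →
      x ∈ LinearMap.ker M.mulVecLin := by
    intro x hx
    rw [LinearMap.mem_ker]
    funext j
    rw [Matrix.mulVecLin_apply]
    have : M.mulVec x j = ∑ i, x i *
        (if S.gam (j.rev) ≤ S.o i then cf (S.F i) (Sum.inr j.rev) (S.o i - S.gam j.rev)
          else 0) := by
      rw [Matrix.mulVec, dotProduct]
      refine Finset.sum_congr rfl ?_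
      intro i _
      rw [hM, Matrix.transpose_apply, Sys.Smat, Matrix.of_apply, mul_comm]
    rw [this, hx j.rev]
    rfl
  have hrk : M.rank = n - 1 := by rw [hM, Matrix.rank_transpose]; exact hrank
  have h2 := LinearMap.finrank_range_add_finrank_ker (Matrix.mulVecLin M)
  rw [Module.finrank_fin_fun] at h2
  have hrkdef : M.rank = Module.finrank K (LinearMap.range M.mulVecLin) := rfl
  have h3 : Module.finrank K (LinearMap.ker M.mulVecLin) = 1 := by omega
  have haker := hker a ha
  have hwker := hker w hw
  have hsp : Submodule.span K {a} ≤ LinearMap.ker M.mulVecLin :=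
    (Submodule.span_singleton_le_iff_mem _ _).mpr haker
  have hfr : Module.finrank K (Submodule.span K ({a} : Set (Fin n → K))) = 1 :=
    finrank_span_singleton ha0
  have heq : Submodule.span K {a} = LinearMap.ker M.mulVecLin :=
    Submodule.eq_of_le_of_finrank_le hsp (by omega)
  rw [← heq] at hwker
  obtain ⟨c, hc⟩ := Submodule.mem_span_singleton.mp hwker
  refine ⟨c, ?_⟩
  intro i
  rw [← hc]
  simp [Pi.smul_apply, smul_eq_mul]

theorem coOrd_bdd {f : R K n} (hlin : IsLinearPoly f) (hvne : f.vars.Nonempty) :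
    BddAbove {c : ℕ | S.PSIdealMem ((⇑S.D)^[c] f)} := by
  obtain ⟨w0, hw0, hw0max⟩ : ∃ w0 ∈ f.vars, w0.2 = ordTot f := by
    have himg : (f.vars.image Prod.snd).Nonempty := hvne.image _
    obtain ⟨b, hb⟩ := Finset.max_of_nonempty himg
    obtain ⟨w0, hw0, hw0b⟩ := Finset.mem_image.mp (Finset.mem_of_max hb)
    refine ⟨w0, hw0, ?_⟩
    rw [ordTot, hb, WithBot.unbotD_coe, hw0b]
  refine ⟨S.Nn, ?_⟩
  intro c hc
  have hcf : cf ((⇑S.D)^[c] f) w0.1 (w0.2 + c) ≠ 0 := by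
    rw [cf_Dit_top S (fun m hm => cf_eq_zero_of_ordTot_lt (by omega)) c]
    exact cf_ne_zero_of_mem_vars hlin hw0
  have hmem : ((w0.1, w0.2 + c) : Vr n) ∈ ((⇑S.D)^[c] f).vars :=
    mem_vars_of_cf (w := (w0.1, w0.2 + c)) hcf
  have hin := hc.2 _ hmem
  rcases hw1 : w0.1 with i | j
  · rw [hw1] at hin
    simp only [Sum.elim_inl] at hin
    omega
  · rw [hw1] at hin
    simp only [Sum.elim_inr] at hin
    omega

theorem coOrd_spec {f : R K n} (hlin : IsLinearPoly f) (hvne : f.vars.Nonempty)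
    (h0 : S.PSIdealMem f) :
    S.PSIdealMem ((⇑S.D)^[S.coOrd f] f) ∧
      ∀ c, S.PSIdealMem ((⇑S.D)^[c] f) → c ≤ S.coOrd f := by
  have hne : {c : ℕ | S.PSIdealMem ((⇑S.D)^[c] f)}.Nonempty := ⟨0, by simpa using h0⟩
  have hbdd := coOrd_bdd S hlin hvne
  exact ⟨Nat.sSup_mem hne hbdd, fun c hc => le_csSup hbdd hc⟩

end Aux8
/-- Let `A` be a nonzero linear `ID`-primitive differential polynomial
in `(G₀)` with `|G₀| = c(A) + 1` and suppose `rank(S) = n - 1`. Given `B ∈ G \ G₀`,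
suppose there is `1 ≤ e_B ≤ c(A)` with `ord(B,uⱼ) ≤ N - γⱼ - γ - e_B` for all `j`.
Then there exists `B̄ ∈ (G₀)` such that `c(B - B̄) ≥ e_B`. -/
theorem statement_9 {K : Type} [Field K] {n : ℕ} (S : Sys K n) (G : Finset (R K n))
    (hG : S.IsAssocGB G) (A : R K n) (hA0 : A ≠ 0) (hAlin : IsLinearPoly A)
    (hAx : xOnly A) (hAPS : S.PSIdealMem A) (hAprim : S.IDPrimitive A)
    (hcard : (G0 G).card = S.coOrd A + 1) (hrank : S.Smat.rank = n - 1)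
    (B : R K n) (hBG : B ∈ G) (hBnx : ¬ xOnly B)
    (e : ℕ) (he1 : 1 ≤ e) (he2 : e ≤ S.coOrd A)
    (hord : ∀ j : Fin (n - 1),
      ordIn B (Sum.inr j) ≤ (S.Nn : ℤ) - S.gam j - S.gamT - e) :
    ∃ Bbar : R K n, S.PSIdealMem Bbar ∧ xOnly Bbar ∧ e ≤ S.coOrd (B - Bbar) := by
  classical
  set cA := S.coOrd A with hcAdef
  have hcA1 : 1 ≤ cA := le_trans he1 he2
  obtain ⟨hB0, hBlin, hBXV, hBspan⟩ := hG.1 B hBG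
  -- A is not a constant
  have hAnc : A.vars.Nonempty := by
    rcases Finset.eq_empty_or_nonempty A.vars with he | hne
    · exfalso
      have hcf0 : ∀ (v : Fin n ⊕ Fin (n-1)) (k : ℕ), cf A v k = 0 := by
        intro v k
        by_contra hc
        have hs := mem_support_iff.mpr hc
        have hsne : (Finsupp.single ((v,k) : Vr n) 1) ≠ 0 := by
          intro h0
          exact one_ne_zero (Finsupp.single_eq_zero.mp h0)
        obtain ⟨w, hw⟩ := Finsupp.support_nonempty_iff.mpr hsne
        have : w ∈ A.vars := (mem_vars w).mpr ⟨_, hs, hw⟩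
        rw [he] at this
        simp at this
      have hop : ∀ i, S.opOf A i = 0 := by
        intro i
        rw [Sys.opOf]
        refine Finset.sum_eq_zero ?_
        intro k _
        rw [show cf A (Sum.inl i) k = 0 from hcf0 _ k, Polynomial.monomial_zero_right]
      have hdvd : ∀ i, S.leftDvd Polynomial.X (S.opOf A i) := by
        intro i
        refine ⟨0, ?_⟩
        intro f
        rw [hop]
        simp [Sys.applyOp, Dit_zero]
      have h1 := hAprim Polynomial.X hdvd
      rw [Polynomial.natDegree_X] at h1
      exact one_ne_zero h1
    · exact hne
  have hAco := coOrd_spec S hAlin hAnc hAPS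
  have hAu : ∀ (j : Fin (n-1)) (m : ℕ), cf A (Sum.inr j) m = 0 := by
    intro j m
    by_contra hc
    have := hAx _ (mem_vars_of_cf (w := (Sum.inr j, m)) hc)
    simp at this
  have hAvan : ∀ (i : Fin n) (k : ℕ),
      ((S.Nn - S.o i - S.gamT : ℕ):ℤ) - cA < k → cf A (Sum.inl i) k = 0 := by
    intro i
    refine cf_Dit_down S cA ?_
    intro m hm
    exact L1van S hAco.1.1 (lin_Dit S hAlin cA) i m (by omega)
  have hAsc : ∀ (i : Fin n) (k : ℕ),
      (S.Nn:ℤ) - S.o i - S.gamT - cA < k → cf A (Sum.inl i) k = 0 := by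
    intro i k hk
    by_cases h : ((S.Nn - S.o i - S.gamT : ℕ):ℤ) - cA < k
    · exact hAvan i k h
    · exfalso; omega
  -- order conditions on B
  have hordc : ∀ (j : Fin (n-1)) (m : ℕ),
      (S.Nn:ℤ) - S.gam j - S.gamT - e < m → cf B (Sum.inr j) m = 0 := by
    intro j m hm
    refine cf_eq_zero_of_ordIn_lt ?_
    have := hord j
    omega
  have hordNN : ∀ j : Fin (n-1), (S.gamT:ℤ) + S.gam j + e ≤ S.Nn + 1 := by
    intro j
    have h1 := neg_one_le_ordIn B (Sum.inr j)
    have h2 := hord j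
    omega
  -- the kernel vector coming from A
  set a : Fin n → K := fun i => cf A (Sum.inl i) (S.Nn - S.o i - S.gamT - cA) with haDef
  have haK : ∀ j, ∑ i, a i *
      (if S.gam j ≤ S.o i then cf (S.F i) (Sum.inr j) (S.o i - S.gam j) else 0) = 0 := by
    intro j
    by_cases hM0 : 0 ≤ (S.Nn:ℤ) - S.gamT - S.gam j - cA
    · set M := ((S.Nn:ℤ) - S.gamT - S.gam j - cA).toNat with hMdef
      have hMeq : (M:ℤ) = (S.Nn:ℤ) - S.gamT - S.gam j - cA := Int.toNat_of_nonneg hM0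
      have hwork := WORK S hAPS.1 hAlin (cA:ℤ) (hAsc) j M hMeq
      rw [hAu j M] at hwork
      have hco : ∀ i ∈ (Finset.univ : Finset (Fin n)), a i *
          (if S.gam j ≤ S.o i then cf (S.F i) (Sum.inr j) (S.o i - S.gam j) else 0)
          = (if 0 ≤ (S.Nn:ℤ) - S.o i - S.gamT - (cA:ℤ) then
              cf A (Sum.inl i) (((S.Nn:ℤ) - S.o i - S.gamT - (cA:ℤ)).toNat) else 0) *
            (if S.gam j ≤ S.o i then cf (S.F i) (Sum.inr j) (S.o i - S.gam j) else 0) := by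
        intro i _
        congr 1
        by_cases h0 : 0 ≤ (S.Nn:ℤ) - S.o i - S.gamT - (cA:ℤ)
        · rw [if_pos h0]
          show cf A (Sum.inl i) (S.Nn - S.o i - S.gamT - cA) = _
          congr 1
          omega
        · rw [if_neg h0]
          show cf A (Sum.inl i) (S.Nn - S.o i - S.gamT - cA) = 0
          exact hAvan i _ (by omega)
      rw [Finset.sum_congr rfl hco]
      exact hwork.symm
    · refine Finset.sum_eq_zero ?_
      intro i _
      by_cases hg : S.gam j ≤ S.o i
      · by_cases hai : a i = 0
        · rw [hai, zero_mul]
        · exfalso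
          have hKcA : ¬ (((S.Nn - S.o i - S.gamT : ℕ):ℤ) - cA
              < ((S.Nn - S.o i - S.gamT - cA : ℕ):ℤ)) := by
            intro hlt
            exact hai (hAvan i _ hlt)
          omega
      · rw [if_neg hg, mul_zero]
  have ha0 : a ≠ 0 := by
    intro haz
    have hAvan' : ∀ (i : Fin n) (k : ℕ),
        ((S.Nn - S.o i - S.gamT : ℕ):ℤ) - cA - 1 < k → cf A (Sum.inl i) k = 0 := by
      intro i k hk
      by_cases h : ((S.Nn - S.o i - S.gamT : ℕ):ℤ) - cA < k
      · exact hAvan i k h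
      · have hkk : k = S.Nn - S.o i - S.gamT - cA := by omega
        rw [hkk]
        show a i = 0
        rw [haz]
        rfl
    have hscA : ∀ (i : Fin n) (k : ℕ),
        (S.Nn:ℤ) - S.o i - S.gamT - ((cA+1 : ℕ):ℤ) < k → cf A (Sum.inl i) k = 0 := by
      intro i k hk
      by_cases h : ((S.Nn - S.o i - S.gamT : ℕ):ℤ) - cA - 1 < k
      · exact hAvan' i k h
      · exfalso; omega
    have hAVt1 : A ∈ Submodule.span K (VtSet S (cA+1)) :=
      rep_mem_Vt S hAPS.1 hAlin (cA+1) (by exact_mod_cast hscA)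
    have hD1 : (⇑S.D)^[cA+1] A ∈ Ideal.span S.PSset := by
      have h2 := Dit_Vt S (le_refl (cA+1)) hAVt1
      rw [Nat.sub_self] at h2
      exact Vt_mem_ideal S h2
    have hmemset : S.PSIdealMem ((⇑S.D)^[cA+1] A) := by
      refine ⟨hD1, ?_⟩
      intro w hw
      obtain ⟨wv, wk⟩ := w
      have hcfw := cf_ne_zero_of_mem_vars (lin_Dit S hAlin (cA+1)) hw
      rcases wv with i | j
      · simp only [Sum.elim_inl]
        by_contra hgt
        refine hcfw (cf_Dit_vanish S (M := ((S.Nn - S.o i - S.gamT : ℕ):ℤ) - cA - 1)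
          (hAvan' i) (cA+1) wk ?_)
        omega
      · exfalso
        exact hcfw (cf_Dit_vanish' S (hAu j) (cA+1) wk)
    have := hAco.2 (cA+1) hmemset
    omega
  -- every `o i` is at most `N`
  have ho_le : ∀ i, S.o i ≤ S.Nn := by
    intro i
    have h1 : S.Nn = ∑ i', S.o i' := rfl
    rw [h1]
    exact Finset.single_le_sum (fun _ _ => Nat.zero_le _) (Finset.mem_univ i)
  -- components of B at "bad" indices vanish
  set Pp : ℕ → Prop :=
    fun t => ∀ i : Fin n, (S.Nn:ℤ) - S.o i - S.gamT ≤ -(t:ℤ) → cf B (Sum.inl i) 0 = 0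
    with hPpdef
  have Pstep : ∀ t : ℕ, 1 ≤ t → Pp (t+1) → Pp t := by
    intro t ht IH i hi
    have hsc : ∀ (i' : Fin n) (k : ℕ),
        (S.Nn:ℤ) - S.o i' - S.gamT - (-(t:ℤ)) < k → cf B (Sum.inl i') k = 0 := by
      intro i' k hk
      match k with
      | 0 => exact IH i' (by omega)
      | (k+1) =>
        by_cases hkK : S.Nn - S.o i' - S.gamT < k + 1
        · exact L1van S hBspan hBlin i' (k+1) hkK
        · exfalso; omega
    have hvK : ∀ j, ∑ i',
        (if 0 ≤ (S.Nn:ℤ) - S.o i' - S.gamT - (-(t:ℤ)) then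
          cf B (Sum.inl i') (((S.Nn:ℤ) - S.o i' - S.gamT - (-(t:ℤ))).toNat) else 0) *
        (if S.gam j ≤ S.o i' then cf (S.F i') (Sum.inr j) (S.o i' - S.gam j) else 0)
        = 0 := by
      intro j
      have hgg := hordNN j
      have hM : ((S.Nn - S.gamT - S.gam j + t : ℕ):ℤ)
          = (S.Nn:ℤ) - S.gamT - S.gam j - (-(t:ℤ)) := by omega
      have hwork := WORK S hBspan hBlin (-(t:ℤ)) hsc j (S.Nn - S.gamT - S.gam j + t) hM
      rw [hordc j _ (by omega)] at hwork
      exact hwork.symm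
    obtain ⟨lam, hlam⟩ := kern S S.hn hrank a ha0 haK _ hvK
    by_cases heq : (S.Nn:ℤ) - S.o i - S.gamT = -(t:ℤ)
    · have h1 := hlam i
      rw [if_pos (by omega),
        show ((S.Nn:ℤ) - S.o i - S.gamT - (-(t:ℤ))).toNat = 0 by omega] at h1
      have h2 : a i = 0 := by
        show cf A (Sum.inl i) (S.Nn - S.o i - S.gamT - cA) = 0
        exact hAvan i _ (by omega)
      rw [h1, h2, mul_zero]
    · exact IH i (by omega)
  have Pall : ∀ d : ℕ, d ≤ S.Nn + S.gamT → Pp (S.Nn + S.gamT + 1 - d) := by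
    intro d
    induction d with
    | zero =>
      intro _ i hi
      exfalso
      have := ho_le i
      simp only [Nat.sub_zero] at hi
      omega
    | succ d ih =>
      intro hd
      have h1 : Pp (S.Nn + S.gamT + 1 - d) := ih (by omega)
      have h2 : Pp ((S.Nn + S.gamT + 1 - (d+1)) + 1) := by
        rwa [show S.Nn + S.gamT + 1 - (d+1) + 1 = S.Nn + S.gamT + 1 - d by omega]
      exact Pstep _ (by omega) h2
  have hbad : ∀ i : Fin n, (S.Nn:ℤ) - S.o i - S.gamT < 0 → cf B (Sum.inl i) 0 = 0 := by
    have h1 := Pall (S.Nn + S.gamT) le_rfl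
    rw [show S.Nn + S.gamT + 1 - (S.Nn + S.gamT) = 1 by omega] at h1
    intro i hi
    exact h1 i (by omega)
  -- the main layer-by-layer reduction
  have MAIN : ∀ s : ℕ, s ≤ e → ∃ Bb : R K n,
      Bb ∈ Ideal.span S.PSset ∧ IsLinearPoly Bb ∧
      (∀ (j : Fin (n-1)) (m : ℕ), cf Bb (Sum.inr j) m = 0) ∧
      (∀ (i : Fin n) (k : ℕ), S.Nn - S.o i - S.gamT < k → cf Bb (Sum.inl i) k = 0) ∧
      (∀ (i : Fin n) (k : ℕ), (S.Nn:ℤ) - S.o i - S.gamT - s < k →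
        cf (B - Bb) (Sum.inl i) k = 0) := by
    intro s
    induction s with
    | zero =>
      intro _
      refine ⟨0, Ideal.zero_mem _, by rw [IsLinearPoly, totalDegree_zero]; omega,
        fun j m => cf_zero _ _, fun i k _ => cf_zero _ _, ?_⟩
      intro i k hk
      rw [sub_zero]
      match k with
      | 0 => exact hbad i (by omega)
      | (k+1) =>
        by_cases hkK : S.Nn - S.o i - S.gamT < k + 1
        · exact L1van S hBspan hBlin i (k+1) hkK
        · exfalso; omega
    | succ s ih =>
      intro hse
      obtain ⟨Bb, hBbI, hBblin, hBbu, hBbx, hRv⟩ := ih (by omega)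
      have hRsI : B - Bb ∈ Ideal.span S.PSset := Ideal.sub_mem _ hBspan hBbI
      have hRslin : IsLinearPoly (B - Bb) := lin_sub hBlin hBblin
      have hvK : ∀ j, ∑ i,
          (if 0 ≤ (S.Nn:ℤ) - S.o i - S.gamT - (s:ℤ) then
            cf (B - Bb) (Sum.inl i) (((S.Nn:ℤ) - S.o i - S.gamT - (s:ℤ)).toNat) else 0) *
          (if S.gam j ≤ S.o i then cf (S.F i) (Sum.inr j) (S.o i - S.gam j) else 0)
          = 0 := by
        intro j
        have hgg := hordNN j
        have hM : ((S.Nn - S.gamT - S.gam j - s : ℕ):ℤ)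
            = (S.Nn:ℤ) - S.gamT - S.gam j - (s:ℤ) := by omega
        have hwork := WORK S hRsI hRslin (s:ℤ) hRv j (S.Nn - S.gamT - S.gam j - s) hM
        have hLHS : cf (B - Bb) (Sum.inr j) (S.Nn - S.gamT - S.gam j - s) = 0 := by
          rw [cf_sub, hBbu j _, sub_zero]
          exact hordc j _ (by omega)
        rw [hLHS] at hwork
        exact hwork.symm
      obtain ⟨lam, hlam⟩ := kern S S.hn hrank a ha0 haK _ hvK
      have hAVt : A ∈ Submodule.span K (VtSet S cA) :=
        rep_mem_Vt S hAPS.1 hAlin cA (by exact_mod_cast hAsc)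
      have hDitA_mem : (⇑S.D)^[cA - s] A ∈ Ideal.span S.PSset := by
        have h2 := Dit_Vt S (show cA - s ≤ cA by omega) hAVt
        exact Vt_mem_ideal S h2
      refine ⟨Bb + lam • (⇑S.D)^[cA - s] A, ?_, ?_, ?_, ?_, ?_⟩
      · refine Ideal.add_mem _ hBbI ?_
        rw [smul_eq_C_mul]
        exact Ideal.mul_mem_left _ _ hDitA_mem
      · exact lin_add hBblin (lin_smul (lin_Dit S hAlin _))
      · intro j m
        rw [cf_add, hBbu j m, cf_smul, cf_Dit_vanish' S (hAu j) _ m, mul_zero, add_zero]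
      · intro i k hk
        rw [cf_add, hBbx i k hk, cf_smul, zero_add]
        have hDz : cf ((⇑S.D)^[cA - s] A) (Sum.inl i) k = 0 := by
          by_cases hKc : S.Nn - S.o i - S.gamT < cA
          · exact cf_Dit_vanish' S (fun m => hAvan i m (by omega)) _ k
          · refine cf_Dit_vanish S (M := ((S.Nn - S.o i - S.gamT : ℕ):ℤ) - cA)
              (hAvan i) _ _ ?_
            omega
        rw [hDz, mul_zero]
      · intro i k hk
        rw [show B - (Bb + lam • (⇑S.D)^[cA - s] A)
            = (B - Bb) - lam • (⇑S.D)^[cA - s] A by ring, cf_sub, cf_smul]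
        by_cases hcase : (S.Nn:ℤ) - S.o i - S.gamT - s < k
        · rw [hRv i k hcase]
          have hDz : cf ((⇑S.D)^[cA - s] A) (Sum.inl i) k = 0 := by
            by_cases hKc : S.Nn - S.o i - S.gamT < cA
            · exact cf_Dit_vanish' S (fun m => hAvan i m (by omega)) _ k
            · refine cf_Dit_vanish S (M := ((S.Nn - S.o i - S.gamT : ℕ):ℤ) - cA)
                (hAvan i) _ _ ?_
              omega
          rw [hDz, mul_zero, sub_zero]
        · have hk0 : (k:ℤ) = (S.Nn:ℤ) - S.o i - S.gamT - s := by omega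
          have hvi : cf (B - Bb) (Sum.inl i) k = lam * a i := by
            have h1 := hlam i
            rw [if_pos (by omega),
              show ((S.Nn:ℤ) - S.o i - S.gamT - (s:ℤ)).toNat = k by omega] at h1
            exact h1
          have hDa : cf ((⇑S.D)^[cA - s] A) (Sum.inl i) k = a i := by
            by_cases hKc : S.Nn - S.o i - S.gamT < cA
            · have h1 : cf ((⇑S.D)^[cA - s] A) (Sum.inl i) k = 0 :=
                cf_Dit_vanish' S (fun m => hAvan i m (by omega)) _ k
              have h2 : a i = 0 := by
                show cf A (Sum.inl i) (S.Nn - S.o i - S.gamT - cA) = 0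
                exact hAvan i _ (by omega)
              rw [h1, h2]
            · have h1 := cf_Dit_top S (f := A) (v := Sum.inl i)
                (M := S.Nn - S.o i - S.gamT - cA)
                (fun m hm => hAvan i m (by omega)) (cA - s)
              rw [show S.Nn - S.o i - S.gamT - cA + (cA - s) = k by omega] at h1
              rw [h1]
          rw [hvi, hDa]
          ring
  -- conclude
  obtain ⟨Bb, hBbI, hBblin, hBbu, hBbx, hRv⟩ := MAIN e le_rfl
  have hRrI : B - Bb ∈ Ideal.span S.PSset := Ideal.sub_mem _ hBspan hBbI
  have hRrlin : IsLinearPoly (B - Bb) := lin_sub hBlin hBblin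
  refine ⟨Bb, ⟨hBbI, ?_⟩, ?_, ?_⟩
  · -- Bb ∈ K[X][V]
    intro w hw
    obtain ⟨wv, wk⟩ := w
    have hcfw := cf_ne_zero_of_mem_vars hBblin hw
    rcases wv with i | j
    · simp only [Sum.elim_inl]
      by_contra hgt
      exact hcfw (hBbx i wk (by omega))
    · exfalso
      exact hcfw (hBbu j wk)
  · -- Bb ∈ K{X}
    intro w hw
    obtain ⟨wv, wk⟩ := w
    rcases wv with i | j
    · rfl
    · exfalso
      exact (cf_ne_zero_of_mem_vars hBblin hw) (hBbu j wk)
  · -- e ≤ coOrd (B - Bb)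
    obtain ⟨wB, hwB, hwBr⟩ : ∃ w ∈ B.vars, (w.1).isRight := by
      by_contra hco
      push_neg at hco
      refine hBnx ?_
      intro w hw
      have := hco w hw
      rcases hww : w.1 with i | j
      · rfl
      · exfalso; rw [hww] at this; simp at this
    have hvne : (B - Bb).vars.Nonempty := by
      obtain ⟨wv, wk⟩ := wB
      rcases wv with i | j
      · simp at hwBr
      · refine ⟨(Sum.inr j, wk), ?_⟩
        apply mem_vars_of_cf
        have h1 := cf_ne_zero_of_mem_vars hBlin hwB
        simp only at h1 ⊢
        rw [cf_sub, hBbu j wk, sub_zero]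
        exact h1
    have hbdd := coOrd_bdd S hRrlin hvne
    have heMem : S.PSIdealMem ((⇑S.D)^[e] (B - Bb)) := by
      constructor
      · have hRrVt : (B - Bb) ∈ Submodule.span K (VtSet S e) :=
          rep_mem_Vt S hRrI hRrlin e hRv
        have h2 := Dit_Vt S (le_refl e) hRrVt
        rw [Nat.sub_self] at h2
        exact Vt_mem_ideal S h2
      · intro w hw
        obtain ⟨wv, wk⟩ := w
        have hcfw := cf_ne_zero_of_mem_vars (lin_Dit S hRrlin e) hw
        rcases wv with i | j
        · simp only [Sum.elim_inl]
          by_contra hgt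
          refine hcfw (cf_Dit_vanish S (M := (S.Nn:ℤ) - S.o i - S.gamT - e)
            (hRv i) e wk ?_)
          omega
        · simp only [Sum.elim_inr]
          by_contra hgt
          refine hcfw (cf_Dit_vanish S (M := (S.Nn:ℤ) - S.gam j - S.gamT - e)
            (fun m hm => by rw [cf_sub, hBbu j m, sub_zero]; exact hordc j m hm) e wk ?_)
          omega
    exact le_csSup hbdd heMem

end DPPE
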